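/- Let f : ℝⁿ → ℝ be L-smooth with L-Lipschitz gradient. Then for all x, y: (1/(2L))‖∇f(x) - ∇f(y)‖² - (L/4)‖x - y - (1/L)(∇f(x) - ∇f(y))‖² ≤ f(x) - f(y) - ⟨∇f(y), x - y⟩. -/

import Mathlib

open Set InnerProductSpace

variable {E : Type*} [NormedAddCommGroup E] [InnerProductSpace ℝ E] [CompleteSpace E]

lemma fderiv_apply_eq_inner (f : E → ℝ) (x v : E) :
    fderiv ℝ f x v = (inner ℝ (gradient f x) v : ℝ) := by
  rw [gradient, ← InnerProductSpace.toDual_apply_apply, LinearIsometryEquiv.apply_symm_apply]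

/-- Two-sided descent lemma. -/
lemma descent_abs (f : E → ℝ) (L : ℝ) (hL : 0 < L) (hf : Differentiable ℝ f)
    (hlip : ∀ x y, ‖gradient f x - gradient f y‖ ≤ L * ‖x - y‖) (a b : E) :
    |f b - f a - (inner ℝ (gradient f a) (b - a) : ℝ)| ≤ L / 2 * ‖b - a‖ ^ 2 := by
  set v := b - a with hv
  set g : ℝ → ℝ := fun t => f (a + t • v) - f a - t * (inner ℝ (gradient f a) v : ℝ) with hg
  have hc : ∀ t : ℝ, HasDerivAt (fun s : ℝ => a + s • v) v t := by
    intro t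
    simpa using ((hasDerivAt_id t).smul_const v).const_add a
  have hg' : ∀ t : ℝ, HasDerivAt g
      ((inner ℝ (gradient f (a + t • v) - gradient f a) v : ℝ)) t := by
    intro t
    have h1 : HasDerivAt (fun s : ℝ => f (a + s • v))
        ((inner ℝ (gradient f (a + t • v)) v : ℝ)) t := by
      have := (hf (a + t • v)).hasFDerivAt.comp_hasDerivAt t (hc t)
      simp [fderiv_apply_eq_inner, -inner_gradient_left] at this; exact this
    have h2 : HasDerivAt (fun s : ℝ => s * (inner ℝ (gradient f a) v : ℝ))
        ((inner ℝ (gradient f a) v : ℝ)) t := by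
      simpa using (hasDerivAt_id t).mul_const ((inner ℝ (gradient f a) v : ℝ))
    have := (h1.sub_const (f a)).sub h2
    rw [inner_sub_left]; exact this
  have key : ∀ x ∈ Icc (0:ℝ) 1, ‖g x‖ ≤ L / 2 * ‖v‖ ^ 2 * x ^ 2 := by
    have hB : ∀ t : ℝ, HasDerivAt (fun t : ℝ => L / 2 * ‖v‖ ^ 2 * t ^ 2) (L * ‖v‖ ^ 2 * t) t := by
      intro t
      have := (hasDerivAt_pow 2 t).const_mul (L / 2 * ‖v‖ ^ 2)
      convert this using 1
      · rfl
      · rfl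
      · norm_num; ring
    have bound : ∀ t ∈ Ico (0:ℝ) 1,
        ‖(inner ℝ (gradient f (a + t • v) - gradient f a) v : ℝ)‖ ≤ L * ‖v‖ ^ 2 * t := by
      intro t ht
      have h1 : ‖(inner ℝ (gradient f (a + t • v) - gradient f a) v : ℝ)‖
          ≤ ‖gradient f (a + t • v) - gradient f a‖ * ‖v‖ := norm_inner_le_norm _ _
      have h2 : ‖gradient f (a + t • v) - gradient f a‖ ≤ L * (t * ‖v‖) := by
        have := hlip (a + t • v) a
        have he : ‖a + t • v - a‖ = t * ‖v‖ := by
          rw [add_sub_cancel_left, norm_smul, Real.norm_eq_abs, abs_of_nonneg ht.1]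
        rw [he] at this
        exact this
      calc ‖(inner ℝ (gradient f (a + t • v) - gradient f a) v : ℝ)‖
          ≤ (L * (t * ‖v‖)) * ‖v‖ :=
            le_trans h1 (mul_le_mul_of_nonneg_right h2 (norm_nonneg _))
        _ = L * ‖v‖ ^ 2 * t := by ring
    exact image_norm_le_of_norm_deriv_right_le_deriv_boundary
      (fun t _ => ((hg' t).continuousAt).continuousWithinAt)
      (fun t _ => (hg' t).hasDerivWithinAt)
      (by simp [hg]) hB bound
  have h1 := key 1 (by norm_num)
  have : g 1 = f b - f a - (inner ℝ (gradient f a) (b - a) : ℝ) := by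
    simp [hg, hv]
  rw [this] at h1
  simpa [Real.norm_eq_abs, -inner_gradient_left] using h1

lemma descent_upper (f : E → ℝ) (L : ℝ) (hL : 0 < L) (hf : Differentiable ℝ f)
    (hlip : ∀ x y, ‖gradient f x - gradient f y‖ ≤ L * ‖x - y‖) (a b : E) :
    f b ≤ f a + (inner ℝ (gradient f a) (b - a) : ℝ) + L / 2 * ‖b - a‖ ^ 2 := by
  have := abs_le.1 (descent_abs f L hL hf hlip a b)
  linarith [this.2]

lemma descent_lower (f : E → ℝ) (L : ℝ) (hL : 0 < L) (hf : Differentiable ℝ f)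
    (hlip : ∀ x y, ‖gradient f x - gradient f y‖ ≤ L * ‖x - y‖) (a b : E) :
    f a + (inner ℝ (gradient f a) (b - a) : ℝ) - L / 2 * ‖b - a‖ ^ 2 ≤ f b := by
  have := abs_le.1 (descent_abs f L hL hf hlip a b)
  linarith [this.1]

theorem stmt_4 {n : ℕ} (f : EuclideanSpace ℝ (Fin n) → ℝ) (L : ℝ) (hL : 0 < L)
    (hf : Differentiable ℝ f)
    (hlip : ∀ x y, ‖gradient f x - gradient f y‖ ≤ L * ‖x - y‖) :
    ∀ x y, 1 / (2 * L) * ‖gradient f x - gradient f y‖ ^ 2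
        - L / 4 * ‖x - y - (1 / L) • (gradient f x - gradient f y)‖ ^ 2 ≤
      f x - f y - (inner ℝ (gradient f y) (x - y) : ℝ) := by
  intro x y
  set gx := gradient f x with hgx
  set gy := gradient f y with hgy
  set g : EuclideanSpace ℝ (Fin n) := gx - gy with hgdef
  set d : EuclideanSpace ℝ (Fin n) := x - y with hd
  set u : EuclideanSpace ℝ (Fin n) := (1/2 : ℝ) • d + (1/(2*L)) • g with hu
  set z : EuclideanSpace ℝ (Fin n) := x - u with hz
  have h1 := descent_upper f L hL hf hlip x z
  have h2 := descent_lower f L hL hf hlip y z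
  rw [← hgx] at h1
  rw [← hgy] at h2
  have hz1 : z - x = -u := by rw [hz]; abel
  have hz2 : z - y = d - u := by rw [hz, hd]; abel
  have hdu : d - u = (1/2 : ℝ) • d - (1/(2*L)) • g := by
    rw [hu]; module
  have habs0 : |(1:ℝ)/2| = 1/2 := by norm_num
  have habs1 : |1/(2*L)| = 1/(2*L) := abs_of_pos (by positivity)
  have habs2 : |1/L| = 1/L := abs_of_pos (by positivity)
  have E7 : (inner ℝ d g : ℝ) = (inner ℝ gx d : ℝ) - (inner ℝ gy d : ℝ) := by
    rw [real_inner_comm, hgdef, inner_sub_left]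
  have E6 : (inner ℝ gx g : ℝ) = ‖g‖^2 + (inner ℝ gy g : ℝ) := by
    rw [hgdef, ← real_inner_self_eq_norm_sq]
    simp only [inner_sub_left, inner_sub_right]
    have := real_inner_comm gx gy
    linarith [real_inner_comm gx gy]
  have hid : 1 / (2*L) * ‖g‖^2 - L/4 * ‖d - (1/L) • g‖^2 + (inner ℝ gy d : ℝ) =
      (inner ℝ gy (z - y) : ℝ) - (inner ℝ gx (z - x) : ℝ)
        - L/2 * ‖z - x‖^2 - L/2 * ‖z - y‖^2 := by
    rw [hz1, hz2, hdu, hu]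
    simp only [inner_neg_right, norm_neg, inner_add_right, inner_sub_right,
      real_inner_smul_right, real_inner_smul_left, norm_sub_sq_real, norm_add_sq_real,
      norm_smul, Real.norm_eq_abs, habs0, habs1, habs2]
    rw [E7, E6]
    field_simp
    ring
  linarith [h1, h2, hid]
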